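/- The complement in X₂ of the image of ℝ ∪ {∞} is connected. -/
import Mathlib


open OnePoint

/-- Identifications `i ∼ −2i` and `−i ∼ 2i` on the Riemann sphere `OnePoint ℂ`. -/
def relEx2₂ : OnePoint ℂ → OnePoint ℂ → Prop := fun a b =>
  (a = (Complex.I : OnePoint ℂ) ∧ b = ((-(2 * Complex.I) : ℂ) : OnePoint ℂ)) ∨
  (a = ((-Complex.I : ℂ) : OnePoint ℂ) ∧ b = ((2 * Complex.I : ℂ) : OnePoint ℂ))

/-- The subset `ℝ ∪ {∞}` of the Riemann sphere `OnePoint ℂ`. -/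
def realCircle : Set (OnePoint ℂ) :=
  {x | (∃ t : ℝ, x = ((t : ℂ) : OnePoint ℂ)) ∨ x = ∞}

lemma mem_realCircle_iff (z : ℂ) : ((z : OnePoint ℂ) ∈ realCircle) ↔ z.im = 0 := by
  simp only [realCircle, Set.mem_setOf_eq]
  constructor
  · rintro (⟨t, ht⟩ | h)
    · rw [OnePoint.coe_eq_coe] at ht; subst ht; simp
    · exact absurd h (OnePoint.coe_ne_infty z)
  · intro h
    exact Or.inl ⟨z.re, by rw [OnePoint.coe_eq_coe]; exact (Complex.ext (by simp) (by simp [h]))⟩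

lemma rel_invariant {a b : OnePoint ℂ} (h : relEx2₂ a b) :
    a ∈ realCircle ↔ b ∈ realCircle := by
  rcases h with ⟨ha, hb⟩ | ⟨ha, hb⟩ <;> subst ha <;> subst hb <;>
    simp [mem_realCircle_iff, Complex.I_im]

lemma eqvGen_invariant {a b : OnePoint ℂ} (h : Relation.EqvGen relEx2₂ a b) :
    a ∈ realCircle ↔ b ∈ realCircle := by
  induction h with
  | rel a b h => exact rel_invariant h
  | refl => exact Iff.rfl
  | symm _ _ _ ih => exact ih.symm
  | trans _ _ _ _ _ ih1 ih2 => exact ih1.trans ih2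

lemma compl_image_eq :
    (Quot.mk relEx2₂ '' realCircle)ᶜ = Quot.mk relEx2₂ '' realCircleᶜ := by
  ext q
  obtain ⟨x, rfl⟩ := Quot.exists_rep q
  simp only [Set.mem_compl_iff, Set.mem_image]
  constructor
  · intro h
    exact ⟨x, fun hx => h ⟨x, hx, rfl⟩, rfl⟩
  · rintro ⟨y, hy, hyx⟩ ⟨z, hz, hzx⟩
    exact hy ((eqvGen_invariant (Quot.eq.mp (hyx.trans hzx.symm))).mpr hz)

lemma realCircle_compl_eq :
    realCircleᶜ = (fun z : ℂ => (z : OnePoint ℂ)) '' {z | 0 < z.im} ∪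
      (fun z : ℂ => (z : OnePoint ℂ)) '' {z | z.im < 0} := by
  ext x
  cases x with
  | infty =>
    simp only [Set.mem_compl_iff, Set.mem_union, Set.mem_image, Set.mem_setOf_eq]
    constructor
    · intro h; exact absurd (Or.inr rfl) h
    · rintro (⟨z, _, hz⟩ | ⟨z, _, hz⟩) <;> exact absurd hz (OnePoint.coe_ne_infty z)
  | coe z =>
    simp only [Set.mem_compl_iff, mem_realCircle_iff, Set.mem_union, Set.mem_image,
      Set.mem_setOf_eq]
    constructor
    · intro h
      rcases lt_or_gt_of_ne h with h' | h'
      · exact Or.inr ⟨z, h', rfl⟩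
      · exact Or.inl ⟨z, h', rfl⟩
    · rintro (⟨w, hw, hwz⟩ | ⟨w, hw, hwz⟩) <;> rw [OnePoint.coe_eq_coe] at hwz <;>
        subst hwz <;> [exact ne_of_gt hw; exact ne_of_lt hw]

/-- the complement in `X₂ = Quot relEx2₂` of the image of `ℝ ∪ {∞}`
is connected. -/
theorem double_cover_statement_11 :
    IsConnected ((Quot.mk relEx2₂ '' realCircle)ᶜ) := by
  rw [compl_image_eq, realCircle_compl_eq, Set.image_union, ← Set.image_comp, ← Set.image_comp]
  have hc : Continuous (Quot.mk relEx2₂ ∘ (fun z : ℂ => (z : OnePoint ℂ))) :=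
    (continuous_quot_mk).comp OnePoint.continuous_coe
  have hU : IsConnected ((Quot.mk relEx2₂ ∘ (fun z : ℂ => (z : OnePoint ℂ))) '' {z | 0 < z.im}) :=
    ((convex_halfSpace_im_gt (0:ℝ)).isConnected ⟨Complex.I, by simp⟩).image _ hc.continuousOn
  have hL : IsConnected ((Quot.mk relEx2₂ ∘ (fun z : ℂ => (z : OnePoint ℂ))) '' {z | z.im < 0}) :=
    ((convex_halfSpace_im_lt (0:ℝ)).isConnected ⟨-Complex.I, by simp⟩).image _ hc.continuousOn
  have hI : ((Quot.mk relEx2₂ ∘ (fun z : ℂ => (z : OnePoint ℂ))) '' {z | 0 < z.im} ∩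
      (Quot.mk relEx2₂ ∘ (fun z : ℂ => (z : OnePoint ℂ))) '' {z | z.im < 0}).Nonempty := by
    simp only [Set.Nonempty, Set.mem_inter_iff, Set.mem_image, Function.comp_apply]
    refine ⟨Quot.mk relEx2₂ ((Complex.I : ℂ) : OnePoint ℂ), ?_, ?_⟩
    · exact ⟨Complex.I, by simp, rfl⟩
    · exact ⟨-(2 * Complex.I), by simp, (Quot.sound (r := relEx2₂) (Or.inl ⟨rfl, rfl⟩)).symm⟩
  exact IsConnected.union hI hU hL
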